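/- Let 𝕜 be ℝ or ℂ, let U, V, W be finite-dimensional inner product spaces over 𝕜 with dim U ≤ dim V, and let M : U →ₗ[𝕜] W and N : V →ₗ[𝕜] W be linear maps. If for every linear map P : V →ₗ[𝕜] U the Frobenius inner product of M ∘ P and N vanishes, i.e. ∑ᵢ ⟪M (P (vᵢ)), N (vᵢ)⟫ = 0 for an orthonormal basis (vᵢ) of V, then ⟪M u, N v⟫ = 0 for all u ∈ U and v ∈ V (the ranges of M and N are orthogonal subspaces of W); in particular, rank M + rank N ≤ dim W. -/

import Mathlib

open Module

/-- **Lemma 2.4.** If `M : U →ₗ W` and `N : V →ₗ W` (with `dim U ≤ dim V`) satisfy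
`⟨M ∘ P, N⟩ = 0` in the Frobenius inner product for every `P : V →ₗ U`, then the
ranges of `M` and `N` are orthogonal in `W`, and `rank M + rank N ≤ dim W`. -/
theorem orthogonal_ranges_of_frobenius_orthogonal
    {𝕜 : Type*} [RCLike 𝕜] {U V W : Type*}
    [NormedAddCommGroup U] [InnerProductSpace 𝕜 U] [FiniteDimensional 𝕜 U]
    [NormedAddCommGroup V] [InnerProductSpace 𝕜 V] [FiniteDimensional 𝕜 V]
    [NormedAddCommGroup W] [InnerProductSpace 𝕜 W] [FiniteDimensional 𝕜 W]
    (hdim : finrank 𝕜 U ≤ finrank 𝕜 V)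
    (M : U →ₗ[𝕜] W) (N : V →ₗ[𝕜] W)
    {ι : Type*} [Fintype ι] (v : OrthonormalBasis ι 𝕜 V)
    (h : ∀ P : V →ₗ[𝕜] U, ∑ i, (inner 𝕜 (M (P (v i))) (N (v i)) : 𝕜) = 0) :
    (∀ (u : U) (w : V), (inner 𝕜 (M u) (N w) : 𝕜) = 0) ∧
      finrank 𝕜 (LinearMap.range M) + finrank 𝕜 (LinearMap.range N)
        ≤ finrank 𝕜 W := by
  have key : ∀ (u : U) (w : V), (inner 𝕜 (M u) (N w) : 𝕜) = 0 := by
    intro u w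
    have hP := h ((((innerSL 𝕜 w).toLinearMap)).smulRight u)
    simp only [LinearMap.smulRight_apply, ContinuousLinearMap.coe_coe, innerSL_apply_apply,
      map_smul, inner_smul_left] at hP
    have hw : w = ∑ i, (inner 𝕜 (v i) w : 𝕜) • v i := by
      simpa using (v.sum_repr' w).symm
    calc (inner 𝕜 (M u) (N w) : 𝕜)
        = inner 𝕜 (M u) (N (∑ i, (inner 𝕜 (v i) w : 𝕜) • v i)) := by rw [← hw]
      _ = ∑ i, (inner 𝕜 (v i) w : 𝕜) * inner 𝕜 (M u) (N (v i)) := by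
          rw [map_sum]; rw [inner_sum]; simp [inner_smul_right]
      _ = 0 := by
          rw [← hP]
          refine Finset.sum_congr rfl fun i _ => ?_
          rw [inner_conj_symm]
  refine ⟨key, ?_⟩
  have hle : LinearMap.range N ≤ (LinearMap.range M)ᗮ := by
    rintro x ⟨w, rfl⟩
    intro y hy
    obtain ⟨u, rfl⟩ := hy
    exact key u w
  calc finrank 𝕜 (LinearMap.range M) + finrank 𝕜 (LinearMap.range N)
      ≤ finrank 𝕜 (LinearMap.range M) + finrank 𝕜 (LinearMap.range M)ᗮ :=
        Nat.add_le_add_left (Submodule.finrank_mono hle) _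
    _ = finrank 𝕜 W := Submodule.finrank_add_finrank_orthogonal _
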